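/- Let φ be a positive CNF formula over variables X_1,…,X_m with nonempty clauses D_1,…,D_ℓ ⊆ {1,…,m}, and let j ∈ ℕ; set N = m+j+1. Define the cooperative game on players {1,…,N} with utility ν(C) = 1 if C ∩ ( D_i ∪ {m+1,…,m+j+1} ) ≠ ∅ for every i ∈ {1,…,ℓ}, and ν(C) = 0 otherwise. Then Shapley(N, ν) = Σ_{k=0}^{m} ( k! · (m+j−k)! / (m+j+1)! ) · s̄_k, where s̄_k = #{C ⊆ {1,…,m} : |C| = k and C ∩ D_i = ∅ for some i ∈ {1,…,ℓ}}. -/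
import Mathlib


open Finset

/-- The Shapley value of player `p` in the cooperative game on players `{1, …, N}` with
utility `ν`:  `Shapley(p, ν) = ∑_{C ⊆ P ∖ {p}} (|C|! (N−|C|−1)! / N!) (ν(C ∪ {p}) − ν(C))`. -/
noncomputable def shapley (N : ℕ) (ν : Finset (Fin N) → ℝ) (p : Fin N) : ℝ :=
  ∑ C ∈ (Finset.univ.erase p).powerset,
    ((Nat.factorial C.card * Nat.factorial (N - C.card - 1) : ℝ) / Nat.factorial N) *
      (ν (insert p C) - ν C)

open scoped Classical in
/-- For a positive CNF formula with nonempty clauses `D 1, …, D ℓ ⊆ {1,…,m}`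
and `j` extra fresh variables, consider the game on `N = m + j + 1` players where a
coalition `C` has utility `1` iff `C ∩ (D i ∪ {m+1, …, m+j+1}) ≠ ∅` for every clause `i`
(a player `q ≥ m+1` satisfies every clause).  Then the Shapley value of player `N` equals
`∑_{k=0}^{m} (k! (m+j−k)! / (m+j+1)!) s̄_k`, where `s̄_k` is the number of `k`-element
variable sets `C ⊆ {1,…,m}` that fail some clause, i.e. `C ∩ D i = ∅` for some `i`. -/
theorem stmt_12 (ℓ m j : ℕ) (D : Fin ℓ → Finset (Fin m)) (hD : ∀ i, (D i).Nonempty)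
    (ν : Finset (Fin (m + j + 1)) → ℝ)
    (hν : ∀ C, ν C =
      if (∀ i : Fin ℓ, ∃ q ∈ C,
          (if h : (q : ℕ) < m then (⟨(q : ℕ), h⟩ : Fin m) ∈ D i else True))
        then (1 : ℝ) else 0) :
    shapley (m + j + 1) ν (Fin.last (m + j)) =
      ∑ k ∈ Finset.range (m + 1),
        ((Nat.factorial k * Nat.factorial (m + j - k) : ℝ) / Nat.factorial (m + j + 1)) *
          (((Finset.univ : Finset (Finset (Fin m))).filter
              (fun C => C.card = k ∧ ∃ i : Fin ℓ, C ∩ D i = ∅)).card : ℝ) := by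
  classical
  set p := Fin.last (m + j) with hp
  have hpm : ¬ ((p : ℕ) < m) := by simp [hp, Fin.last]
  have hP : ∀ C : Finset (Fin (m+j+1)), ν (insert p C) = 1 := by
    intro C
    rw [hν, if_pos]
    intro i
    exact ⟨p, Finset.mem_insert_self _ _, by rw [dif_neg hpm]; trivial⟩
  set w : ℕ → ℝ := fun k =>
    ((Nat.factorial k * Nat.factorial (m + j + 1 - k - 1) : ℝ) / Nat.factorial (m+j+1)) with hw
  set P : Finset (Fin (m+j+1)) → Prop := fun C =>
    (∀ i : Fin ℓ, ∃ q ∈ C,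
      (if h : (q : ℕ) < m then (⟨(q : ℕ), h⟩ : Fin m) ∈ D i else True)) with hPdef
  have step1 : shapley (m + j + 1) ν p
      = ∑ C ∈ ((Finset.univ.erase p).powerset.filter (fun C => ¬ P C)), w C.card := by
    rw [shapley, Finset.sum_filter]
    refine Finset.sum_congr rfl fun C _ => ?_
    rw [hP C, hν C]
    by_cases h : P C
    · rw [if_pos h, if_neg (not_not_intro h)]; ring
    · rw [if_neg h, if_pos h]; ring
  rw [step1]
  -- bijection with subsets of Fin m
  set e : Fin m ↪ Fin (m+j+1) := Fin.castLEEmb (by omega) with he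
  set T : Finset (Finset (Fin m)) :=
    Finset.univ.filter (fun C => ∃ i : Fin ℓ, C ∩ D i = ∅) with hT
  have hset : ((Finset.univ.erase p).powerset.filter (fun C => ¬ P C))
      = T.image (fun C => C.map e) := by
    ext C
    simp only [Finset.mem_filter, Finset.mem_powerset, Finset.mem_image, hT,
      Finset.mem_univ, true_and]
    constructor
    · rintro ⟨-, hC⟩
      simp only [hPdef, not_forall] at hC
      obtain ⟨i, hi⟩ := hC
      push_neg at hi
      have hlt : ∀ q ∈ C, (q : ℕ) < m := by
        intro q hq
        by_contra hq'
        have := hi q hq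
        rw [dif_neg hq'] at this
        exact this trivial
      refine ⟨Finset.univ.filter (fun x : Fin m => e x ∈ C), ⟨i, ?_⟩, ?_⟩
      · ext x
        simp only [Finset.mem_inter, Finset.mem_filter, Finset.mem_univ, true_and,
          Finset.notMem_empty, iff_false, not_and]
        intro hxC hxD
        have h2 := hi (e x) hxC
        have hx : ((e x : Fin (m+j+1)) : ℕ) < m := by
          simp [he]
        rw [dif_pos hx] at h2
        have hxx : (⟨((e x : Fin (m+j+1)) : ℕ), hx⟩ : Fin m) = x := Fin.ext (by simp [he])
        rw [hxx] at h2
        exact h2 hxD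
      · ext q
        simp only [Finset.mem_map, Finset.mem_filter, Finset.mem_univ, true_and]
        constructor
        · rintro ⟨x, hx, rfl⟩; exact hx
        · intro hq
          refine ⟨⟨(q : ℕ), hlt q hq⟩, ?_, ?_⟩
          · have hee : e ⟨(q : ℕ), hlt q hq⟩ = q := Fin.ext (by simp [he])
            rw [hee]; exact hq
          · exact Fin.ext (by simp [he])
    · rintro ⟨C', ⟨i, hi⟩, rfl⟩
      constructor
      · intro q hq
        obtain ⟨x, -, rfl⟩ := Finset.mem_map.mp hq
        simp only [Finset.mem_erase, Finset.mem_univ, and_true]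
        intro hcon
        have : ((e x : Fin (m+j+1)) : ℕ) = m + j := by rw [hcon]; simp [hp]
        have : (x : ℕ) < m := x.isLt
        simp [he] at *
        omega
      · simp only [hPdef, not_forall]
        refine ⟨i, ?_⟩
        push_neg
        intro q hq
        obtain ⟨x, hx, rfl⟩ := Finset.mem_map.mp hq
        have hlt : ((e x : Fin (m+j+1)) : ℕ) < m := by simp [he]
        rw [dif_pos hlt]
        intro hcon
        have hxx : (⟨((e x : Fin (m+j+1)) : ℕ), hlt⟩ : Fin m) = x := Fin.ext (by simp [he])
        have hxD : x ∈ D i := by rw [hxx] at hcon; exact hcon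
        have : x ∈ C' ∩ D i := Finset.mem_inter.mpr ⟨hx, hxD⟩
        rw [hi] at this
        exact absurd this (Finset.notMem_empty x)
  rw [hset, Finset.sum_image (by
    intro a _ b _ hab
    exact Finset.map_injective e hab)]
  have hcardmap : ∀ C : Finset (Fin m), (C.map e).card = C.card := fun C => Finset.card_map _
  simp only [hcardmap]
  -- group by cardinality
  have hfib : ∑ k ∈ Finset.range (m+1), ∑ C ∈ T.filter (fun C => C.card = k), w C.card
      = ∑ C ∈ T, w C.card := by
    apply Finset.sum_fiberwise_of_maps_to
    intro C _
    exact Finset.mem_range.mpr (Nat.lt_succ_of_le (by simpa using Finset.card_le_card (Finset.subset_univ C)))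
  rw [← hfib]
  refine Finset.sum_congr rfl fun k hk => ?_
  have hk' : k ≤ m := Nat.lt_succ_iff.mp (Finset.mem_range.mp hk)
  have h1 : ∑ C ∈ T.filter (fun C => C.card = k), w C.card
      = ∑ C ∈ T.filter (fun C => C.card = k), w k := by
    refine Finset.sum_congr rfl fun C hC => ?_
    rw [(Finset.mem_filter.mp hC).2]
  rw [h1, Finset.sum_const, nsmul_eq_mul]
  have hTk : T.filter (fun C => C.card = k)
      = Finset.univ.filter (fun C => C.card = k ∧ ∃ i : Fin ℓ, C ∩ D i = ∅) := by
    rw [hT, Finset.filter_filter]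
    apply Finset.filter_congr
    intro C _
    tauto
  rw [hTk]
  have hkk : m + j + 1 - k - 1 = m + j - k := by omega
  simp only [hw, hkk]
  ring
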